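/- Sufficient divisibility criterion: let N = 2^K and g ∈ ℚ[χ]/⟨1+χ+⋯+χ^{N-1}⟩ with pr_l(g) ∈ 4·ℤ[χ]/⟨1+χ^{2^l}⟩ for all 0 ≤ l ≤ K-1. If w_l(g) ≥ 2 + K - l - 2^{-l} for all 0 ≤ l ≤ K-1, then g lies in 4·ℤ[χ]/⟨1+χ+⋯+χ^{N-1}⟩. -/

import Mathlib

noncomputable section
open Polynomial

/-- The quotient ring ℚ[χ]/⟨1+χ+⋯+χ^{2^K-1}⟩. -/
abbrev QB (K : ℕ) :=
  Polynomial ℚ ⧸ Ideal.span {(∑ i ∈ Finset.range (2 ^ K), X ^ i : Polynomial ℚ)}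

def mkB (K : ℕ) : Polynomial ℚ →+* QB K := Ideal.Quotient.mk _

/-- The quotient ring ℚ[χ]/⟨1+χ^{2^l}⟩. -/
abbrev QS (l : ℕ) := Polynomial ℚ ⧸ Ideal.span {(1 + X ^ (2 ^ l) : Polynomial ℚ)}

def mkS (l : ℕ) : Polynomial ℚ →+* QS l := Ideal.Quotient.mk _

/-- `IsNF K l g w` : g admits a w_l-normal form pr_l(g) = (2^a/u)·((1-χ)^b·v₁ + 2·v₂)
with u, v₁(1) odd, 0 ≤ b < 2^l, and w = a + b/2^l. -/
def IsNF (K l : ℕ) (g : QB K) (w : ℚ) : Prop :=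
  ∃ (p : Polynomial ℚ) (a u : ℤ) (b : ℕ) (v₁ v₂ : Polynomial ℤ),
    mkB K p = g ∧ Odd u ∧ b < 2 ^ l ∧ Odd (v₁.eval 1) ∧
    mkS l p = mkS l (C ((2 : ℚ) ^ a / (u : ℚ)) *
      ((1 - X) ^ b * v₁.map (Int.castRingHom ℚ) + 2 * v₂.map (Int.castRingHom ℚ))) ∧
    w = a + (b : ℚ) / 2 ^ l

open Classical in
/-- The valuation w_l : w_l(g) = a + b/2^l from the normal form, and ∞ if
1+χ^{2^l} divides g (i.e. no normal form exists). -/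
def wl (K l : ℕ) (g : QB K) : WithTop ℚ :=
  if h : ∃ w : ℚ, IsNF K l g w then (h.choose : WithTop ℚ) else ⊤


namespace Stmt13Aux


def PhiZ (l : ℕ) : Polynomial ℤ := 1 + X ^ (2 ^ l)
def PZ (m : ℕ) : Polynomial ℤ := ∑ i ∈ Finset.range (2 ^ m), X ^ i

lemma PhiZ_monic (l : ℕ) : (PhiZ l).Monic := by
  have h : PhiZ l = X ^ (2 ^ l) + 1 := by rw [PhiZ]; ring
  rw [h]
  refine monic_X_pow_add ?_
  calc (1 : Polynomial ℤ).degree ≤ 0 := degree_one_le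
  _ < (2^l : ℕ) := by exact_mod_cast WithBot.coe_lt_coe.mpr (by positivity)

lemma X_sub_one_ne_zero : (X - 1 : Polynomial ℤ) ≠ 0 := by
  intro h
  have := congrArg (fun q => Polynomial.coeff q 1) h
  simp [Polynomial.coeff_one] at this

lemma one_sub_X_mul_PZ (l : ℕ) : (1 - X) * PZ l = 2 - PhiZ l := by
  have h : (PZ l) * (X - 1) = X ^ (2 ^ l) - 1 := geom_sum_mul _ _
  have h2 : (1 - X) * PZ l = -((PZ l) * (X - 1)) := by ring
  rw [h2, h, PhiZ]; ring

lemma PZ_succ (m : ℕ) : PZ (m + 1) = PZ m * PhiZ m := by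
  apply mul_right_cancel₀ X_sub_one_ne_zero
  have h1 : PZ (m+1) * (X - 1) = X ^ (2 ^ (m+1)) - 1 := geom_sum_mul _ _
  have h2 : PZ m * (X - 1) = X ^ (2 ^ m) - 1 := geom_sum_mul _ _
  rw [h1]
  have h3 : PZ m * PhiZ m * (X - 1) = (PZ m * (X-1)) * PhiZ m := by ring
  rw [h3, h2, PhiZ, pow_succ, pow_mul]
  ring

lemma PZ_prod (K : ℕ) : PZ K = ∏ l ∈ Finset.range K, PhiZ l := by
  induction K with
  | zero => simp [PZ]
  | succ m ih => rw [PZ_succ, Finset.prod_range_succ, ih]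

lemma exists_W0 (l : ℕ) : ∃ W : Polynomial ℤ, (1 - X) ^ (2 ^ l) = PhiZ l + 2 * W := by
  have key : (C (2:ℤ)) ∣ ((1 - X) ^ (2 ^ l) - PhiZ l) := by
    rw [C_dvd_iff_dvd_coeff]
    intro i
    have hmap : ((1 - X) ^ (2 ^ l) - PhiZ l).map (Int.castRingHom (ZMod 2)) = 0 := by
      have e1 : ((1:Polynomial ℤ) - X).map (Int.castRingHom (ZMod 2)) = 1 + X := by
        rw [Polynomial.map_sub, Polynomial.map_one, Polynomial.map_X, CharTwo.sub_eq_add]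
      have e2 : ((1:Polynomial (ZMod 2)) + X) ^ (2 ^ l) = 1 + X ^ (2^l) := by
        rw [add_pow_char_pow]; simp
      rw [Polynomial.map_sub, Polynomial.map_pow, e1, e2, PhiZ]
      simp
    have := congrArg (fun q => Polynomial.coeff q i) hmap
    simp only [Polynomial.coeff_map, Polynomial.coeff_zero] at this
    exact_mod_cast (ZMod.intCast_zmod_eq_zero_iff_dvd _ 2).1 (by exact_mod_cast this)
  obtain ⟨W, hW⟩ := key
  refine ⟨W, ?_⟩
  have h2 : (C (2:ℤ)) = (2 : Polynomial ℤ) := by norm_num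
  rw [h2] at hW
  linear_combination hW

/-- for j ≥ l+1 :  PhiZ l ∣ PhiZ j - 2 -/
lemma PhiZ_dvd_PhiZ_sub_two {l j : ℕ} (h : l < j) : PhiZ l ∣ PhiZ j - 2 := by
  have h1 : PhiZ j - 2 = X ^ (2 ^ j) - 1 := by rw [PhiZ]; ring
  rw [h1]
  have h2 : PhiZ l ∣ X ^ (2 ^ (l+1)) - 1 := by
    refine ⟨X ^ (2^l) - 1, ?_⟩
    rw [PhiZ, pow_succ, pow_mul]
    ring
  refine h2.trans ?_
  obtain ⟨k, hk⟩ : ∃ k, 2 ^ j = 2 ^ (l+1) * k := ⟨2 ^ (j - (l+1)), by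
    rw [← pow_add]; congr 1; omega⟩
  rw [hk, pow_mul]
  have := geom_sum_mul ((X : Polynomial ℤ) ^ (2 ^ (l+1))) k
  exact ⟨_, this.symm.trans (by ring)⟩





/-- abbreviation for the map ℤ[X] → ℚ[X] -/
def mq : Polynomial ℤ → Polynomial ℚ := Polynomial.map (Int.castRingHom ℚ)

lemma mq_inj : Function.Injective mq :=
  Polynomial.map_injective _ Int.cast_injective

lemma mq_dvd_iff {f g : Polynomial ℤ} (hf : f.Monic) : mq f ∣ mq g ↔ f ∣ g :=
  Polynomial.map_dvd_map _ Int.cast_injective hf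

lemma mq_mul (f g : Polynomial ℤ) : mq (f * g) = mq f * mq g := Polynomial.map_mul _
lemma mq_add (f g : Polynomial ℤ) : mq (f + g) = mq f + mq g := Polynomial.map_add _
lemma mq_sub (f g : Polynomial ℤ) : mq (f - g) = mq f - mq g := Polynomial.map_sub _

lemma mq_PhiZ (l : ℕ) : mq (PhiZ l) = 1 + X ^ (2 ^ l) := by
  rw [PhiZ, mq]; simp

/-- cancel a nonzero rational constant -/
lemma dvd_of_dvd_C_mul {c : ℚ} (hc : c ≠ 0) {f g : Polynomial ℚ} (h : f ∣ C c * g) : f ∣ g := by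
  have : g = C c⁻¹ * (C c * g) := by
    rw [← mul_assoc, ← C_mul, inv_mul_cancel₀ hc]; simp
  rw [this]
  exact Dvd.dvd.mul_left h _

/-- cancel (1 - X) modulo PhiZ over ℚ -/
lemma dvd_of_dvd_one_sub_X_mul {l : ℕ} {g : Polynomial ℚ}
    (h : mq (PhiZ l) ∣ (1 - X) * g) : mq (PhiZ l) ∣ g := by
  set Φ : Polynomial ℚ := mq (PhiZ l) with hΦ
  have heval : Φ.eval 1 = 2 := by
    rw [hΦ, mq_PhiZ]; simp; norm_num
  have hmod : Φ %ₘ (X - C 1) = C 2 := by rw [modByMonic_X_sub_C_eq_C_eval, heval]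
  have hdiv := modByMonic_add_div Φ (X - C (1:ℚ))
  -- Φ = C 2 + (X - 1) * (Φ /ₘ (X-1))
  set g1 : Polynomial ℚ := Φ /ₘ (X - C 1) with hg1
  have hC2 : (C (2:ℚ)) = Φ - (X - C 1) * g1 := by linear_combination hdiv - hmod
  rw [C_1] at hC2
  have key : C (2:ℚ) * g = Φ * g + g1 * ((1 - X) * g) := by rw [hC2]; ring
  have hdvd : Φ ∣ C (2:ℚ) * g := by
    rw [key]
    exact dvd_add (dvd_mul_right _ _) (h.mul_left _)
  exact dvd_of_dvd_C_mul (by norm_num) hdvd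




lemma modByMonic_congr {Φ S G : Polynomial ℤ} (hm : Φ.Monic) (h : Φ ∣ S - G) :
    S %ₘ Φ = G %ₘ Φ := by
  have dS : S - S %ₘ Φ = Φ * (S /ₘ Φ) := by
    have := modByMonic_add_div S Φ; linear_combination -this
  have dG : G - G %ₘ Φ = Φ * (G /ₘ Φ) := by
    have := modByMonic_add_div G Φ; linear_combination -this
  have hd : Φ ∣ (S %ₘ Φ - G %ₘ Φ) := by
    have heq : S %ₘ Φ - G %ₘ Φ = (S - G) - (S - S %ₘ Φ) + (G - G %ₘ Φ) := by ring
    rw [heq, dS, dG]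
    exact dvd_add (dvd_sub h (Dvd.intro _ rfl)) (Dvd.intro _ rfl)
  by_contra hne
  have hne' : S %ₘ Φ - G %ₘ Φ ≠ 0 := sub_ne_zero_of_ne hne
  have hdeg := Polynomial.degree_le_of_dvd hd hne'
  have h1 := degree_modByMonic_lt S hm
  have h2 := degree_modByMonic_lt G hm
  have h3 : (S %ₘ Φ - G %ₘ Φ).degree < Φ.degree :=
    lt_of_le_of_lt (degree_sub_le _ _) (max_lt h1 h2)
  exact absurd (lt_of_le_of_lt hdeg h3) (lt_irrefl _)

lemma comp_one_sub_X_one_sub_X (S : Polynomial ℤ) :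
    (S.comp (1 - X)).comp (1 - X) = S := by
  rw [comp_assoc]
  have h : ((1 - X : Polynomial ℤ)).comp (1 - X) = X := by simp [sub_comp]
  rw [h, comp_X]

lemma nf_exists (l : ℕ) : ∀ (n : ℕ) (S : Polynomial ℤ),
    ¬ ((C ((2:ℤ)^n)) ∣ S %ₘ PhiZ l) →
    ∃ (a b : ℕ) (v₁ v₂ : Polynomial ℤ), b < 2^l ∧ Odd (v₁.eval 1) ∧
      PhiZ l ∣ S - C ((2:ℤ)^a) * ((1-X)^b * v₁ + 2*v₂) := by
  intro n
  induction n with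
  | zero => intro S hS; exact absurd (by simpa using one_dvd _) hS
  | succ n ih =>
    intro S hS
    classical
    set T := S.comp (1 - X) with hT
    have hST : T.comp (1 - X) = S := comp_one_sub_X_one_sub_X S
    have hC2 : (C (2:ℤ)) = (2 : Polynomial ℤ) := by norm_num
    by_cases hA : ∃ i, i < 2^l ∧ ¬ (2:ℤ) ∣ T.coeff i
    · -- Case A : directly get exact normal form with a = 0
      have hb := Nat.find_spec hA
      have hmin := fun j (hj : j < Nat.find hA) => Nat.find_min hA hj
      set b := Nat.find hA with hbdef
      set Rb := T %ₘ X ^ b with hRb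
      set V := T /ₘ X ^ b with hV
      have hdiv : Rb + X ^ b * V = T := modByMonic_add_div T (X ^ b)
      have hXbV : ∀ j, (X ^ b * V).coeff j = if b ≤ j then V.coeff (j - b) else 0 := by
        intro j; rw [mul_comm, coeff_mul_X_pow']
      have hRbcoeff : ∀ j, (2:ℤ) ∣ Rb.coeff j := by
        intro j
        rcases lt_or_ge j b with hj | hj
        · have hj2 : j < 2^l := lt_trans hj hb.1
          have heq : Rb.coeff j = T.coeff j := by
            have h := congrArg (fun q => Polynomial.coeff q j) hdiv
            simp only [coeff_add, hXbV j, if_neg (not_le.mpr hj), add_zero] at h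
            exact h
          rw [heq]
          by_contra hodd
          exact (hmin j hj) ⟨hj2, hodd⟩
        · have h0 : Rb.coeff j = 0 := by
            apply coeff_eq_zero_of_degree_lt
            exact lt_of_lt_of_le (degree_modByMonic_lt T (monic_X_pow b))
              (by rw [degree_X_pow]; exact_mod_cast WithBot.coe_le_coe.mpr hj)
          simp [h0]
      obtain ⟨E, hE⟩ : C (2:ℤ) ∣ Rb := (C_dvd_iff_dvd_coeff _ _).mpr hRbcoeff
      have hV0 : ¬ (2:ℤ) ∣ V.coeff 0 := by
        have h1 : (X ^ b * V).coeff b = V.coeff 0 := by rw [hXbV]; simp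
        have h2 : T.coeff b = Rb.coeff b + V.coeff 0 := by
          have h := congrArg (fun q => Polynomial.coeff q b) hdiv
          simp only [coeff_add, h1] at h
          linarith [h]
        intro hdvd
        exact hb.2 (h2 ▸ dvd_add (hRbcoeff b) hdvd)
      refine ⟨0, b, V.comp (1 - X), E.comp (1 - X), hb.1, ?_, ?_⟩
      · rw [eval_comp]
        have h1 : eval 1 (1 - X : Polynomial ℤ) = 0 := by simp
        rw [h1, ← coeff_zero_eq_eval_zero, Int.odd_iff]
        omega
      · have hSexp : S = (1-X)^b * V.comp (1 - X) + 2 * E.comp (1 - X) := by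
          rw [← hST]
          conv_lhs => rw [← hdiv, hE]
          rw [add_comp, mul_comp, mul_comp, pow_comp, X_comp, C_comp, hC2]
          ring
        rw [hSexp]
        simp only [pow_zero, map_one, one_mul]
        exact ⟨0, by ring⟩
    · -- Case B : all low coefficients even, peel off a factor 2
      push_neg at hA

      set R := T %ₘ X ^ (2^l) with hR
      set W := T /ₘ X ^ (2^l) with hW
      have hdiv : R + X ^ (2^l) * W = T := modByMonic_add_div T (X ^ (2^l))
      have hRcoeff : ∀ j, (2:ℤ) ∣ R.coeff j := by
        intro j
        rcases lt_or_ge j (2^l) with hj | hj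
        · have heq : R.coeff j = T.coeff j := by
            have h := congrArg (fun q => Polynomial.coeff q j) hdiv
            simp only [coeff_add, mul_comm (X ^ (2^l) : Polynomial ℤ) W,
              coeff_mul_X_pow', if_neg (not_le.mpr hj), add_zero] at h
            exact h
          rw [heq]; exact hA j hj
        · have h0 : R.coeff j = 0 := by
            apply coeff_eq_zero_of_degree_lt
            exact lt_of_lt_of_le (degree_modByMonic_lt T (monic_X_pow _))
              (by rw [degree_X_pow]; exact_mod_cast WithBot.coe_le_coe.mpr hj)
          simp [h0]
      obtain ⟨E, hE⟩ : C (2:ℤ) ∣ R := (C_dvd_iff_dvd_coeff _ _).mpr hRcoeff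
      obtain ⟨W0, hW0⟩ := exists_W0 l
      have hTcomp : S = 2 * E.comp (1-X) + (1-X)^(2^l) * W.comp (1-X) := by
        rw [← hST]
        conv_lhs => rw [← hdiv, hE]
        rw [add_comp, mul_comp, mul_comp, pow_comp, X_comp, C_comp, hC2]
      have hSG : S - 2 * (E.comp (1-X) + W0 * W.comp (1-X)) = PhiZ l * W.comp (1-X) := by
        rw [hTcomp]
        linear_combination (W.comp (1-X)) * hW0
      have hmod : S %ₘ PhiZ l = C (2:ℤ) * ((E.comp (1-X) + W0 * W.comp (1-X)) %ₘ PhiZ l) := by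
        have h1 : S %ₘ PhiZ l = (C 2 * (E.comp (1-X) + W0 * W.comp (1-X))) %ₘ PhiZ l := by
          apply modByMonic_congr (PhiZ_monic l)
          rw [hC2]
          exact ⟨W.comp (1-X), hSG⟩
        rw [h1, ← smul_eq_C_mul, smul_modByMonic, smul_eq_C_mul]
      have hGmod : ¬ C ((2:ℤ)^n) ∣ ((E.comp (1-X) + W0 * W.comp (1-X)) %ₘ PhiZ l) := by
        rintro ⟨c, hc⟩
        apply hS
        rw [hmod, hc]
        exact ⟨c, by rw [pow_succ, C_mul]; ring⟩
      obtain ⟨a, b, v₁, v₂, hblt, hodd, hdvd⟩ := ih _ hGmod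
      refine ⟨a+1, b, v₁, v₂, hblt, hodd, ?_⟩
      obtain ⟨c, hc⟩ := hdvd
      refine ⟨W.comp (1-X) + 2*c, ?_⟩
      have hCpow : C ((2:ℤ)^(a+1)) = 2 * C ((2:ℤ)^a) := by rw [pow_succ, C_mul, hC2]; ring
      rw [hCpow]
      linear_combination hSG + 2 * hc




lemma nf_exists' (l : ℕ) (S : Polynomial ℤ) (hS : ¬ PhiZ l ∣ S) :
    ∃ (a b : ℕ) (v₁ v₂ : Polynomial ℤ), b < 2^l ∧ Odd (v₁.eval 1) ∧
      PhiZ l ∣ S - C ((2:ℤ)^a) * ((1-X)^b * v₁ + 2*v₂) := by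
  have hR : S %ₘ PhiZ l ≠ 0 :=
    fun h => hS ((modByMonic_eq_zero_iff_dvd (PhiZ_monic l)).mp h)
  obtain ⟨j, hj⟩ : ∃ j, (S %ₘ PhiZ l).coeff j ≠ 0 := by
    by_contra hc
    push_neg at hc
    exact hR (Polynomial.ext hc)
  set m := ((S %ₘ PhiZ l).coeff j).natAbs with hm
  apply nf_exists l (m + 1)
  rintro hdvd
  have h1 : (2:ℤ)^(m+1) ∣ (S %ₘ PhiZ l).coeff j := (C_dvd_iff_dvd_coeff _ _).mp hdvd j
  have h2 : (2:ℕ)^(m+1) ∣ m := by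
    have := Int.natAbs_dvd_natAbs.mpr h1
    simpa [Int.natAbs_pow] using this
  have h3 : 2^(m+1) ≤ m := Nat.le_of_dvd (by omega) h2
  have h4 : m < 2^(m+1) := by
    calc m < m + 1 := Nat.lt_succ_self m
    _ ≤ 2^(m+1) := Nat.le_of_lt Nat.lt_two_pow_self
  omega

lemma exists_two_pow_odd : ∀ (m : ℕ) (d : ℤ), d ≠ 0 → d.natAbs ≤ m →
    ∃ (n : ℕ) (u : ℤ), Odd u ∧ d = 2^n * u := by
  intro m
  induction m with
  | zero => intro d hd h; omega
  | succ m ih =>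
    intro d hd h
    rcases Int.even_or_odd d with he | ho
    · obtain ⟨k, hk⟩ := he
      have hk2 : d = 2 * k := by omega
      have hkne : k ≠ 0 := by omega
      have hkm : k.natAbs ≤ m := by omega
      obtain ⟨n, u, hu, heq⟩ := ih k hkne hkm
      exact ⟨n + 1, u, hu, by rw [hk2, heq]; ring⟩
    · exact ⟨0, d, ho, by ring⟩

lemma prod_cong (d : Polynomial ℤ) (f : ℕ → Polynomial ℤ) (s : Finset ℕ)
    (h : ∀ j ∈ s, d ∣ f j - 2) : d ∣ (∏ j ∈ s, f j) - 2^(s.card) := by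
  induction s using Finset.induction with
  | empty => simp
  | insert a s hnotmem ih =>
    rw [Finset.prod_insert hnotmem, Finset.card_insert_of_notMem hnotmem]
    have h1 : d ∣ f a - 2 := h a (Finset.mem_insert_self a s)
    have h2 : d ∣ (∏ j ∈ s, f j) - 2^(s.card) := ih (fun j hj => h j (Finset.mem_insert_of_mem hj))
    have key : f a * ∏ j ∈ s, f j - 2^(s.card + 1) =
        (f a - 2) * ∏ j ∈ s, f j + 2 * ((∏ j ∈ s, f j) - 2^(s.card)) := by ring
    rw [key]
    exact dvd_add (h1.mul_right _) (h2.mul_left _)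

/-- The complementary factor -/
def PhiHat (l K : ℕ) : Polynomial ℤ := PZ l * ∏ j ∈ Finset.Ico (l+1) K, PhiZ j

lemma C_two_pow (k : ℕ) : C ((2:ℤ)^k) = (2 : Polynomial ℤ)^k := by
  rw [map_pow]; norm_num

lemma PZ_eq_PhiZ_mul_PhiHat {l K : ℕ} (h : l < K) : PZ K = PhiZ l * PhiHat l K := by
  have h1 : PZ K = (∏ j ∈ Finset.range l, PhiZ j) * ∏ j ∈ Finset.Ico l K, PhiZ j := by
    rw [PZ_prod, Finset.prod_range_mul_prod_Ico _ (le_of_lt h)]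
  have h2 : ∏ j ∈ Finset.Ico l K, PhiZ j = PhiZ l * ∏ j ∈ Finset.Ico (l+1) K, PhiZ j :=
    Finset.prod_eq_prod_Ico_succ_bot h _
  rw [h1, h2, ← PZ_prod, PhiHat]; ring

lemma Ico_prod_cong {l K : ℕ} (h : l < K) :
    PhiZ l ∣ (∏ j ∈ Finset.Ico (l+1) K, PhiZ j) - C ((2:ℤ)^(K-1-l)) := by
  have hc : (Finset.Ico (l+1) K).card = K - 1 - l := by
    rw [Nat.card_Ico]; omega
  have := prod_cong (PhiZ l) PhiZ (Finset.Ico (l+1) K)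
    (fun j hj => PhiZ_dvd_PhiZ_sub_two (by simp [Finset.mem_Ico] at hj; omega))
  rw [hc] at this
  rw [C_two_pow]
  exact this

lemma PhiHat_key1 {l K : ℕ} (h : l < K) :
    PhiZ l ∣ (1-X) * PhiHat l K - C ((2:ℤ)^(K-l)) := by
  obtain ⟨c, hc⟩ := Ico_prod_cong h
  have hKl : K - l = (K-1-l) + 1 := by omega
  refine ⟨2 * c - ∏ j ∈ Finset.Ico (l+1) K, PhiZ j, ?_⟩
  have h1 := one_sub_X_mul_PZ l
  rw [PhiHat, hKl, pow_succ, C_mul, C_two_pow]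
  have hC2 : (C (2:ℤ)) = (2 : Polynomial ℤ) := by norm_num
  rw [C_two_pow] at hc
  rw [hC2]
  linear_combination (∏ j ∈ Finset.Ico (l+1) K, PhiZ j) * h1 + 2 * hc

lemma PhiHat_key2 {l K : ℕ} (h : l < K) :
    PhiZ l ∣ PhiHat l K - C ((2:ℤ)^(K-1-l)) * PZ l := by
  obtain ⟨c, hc⟩ := Ico_prod_cong h
  exact ⟨PZ l * c, by rw [PhiHat]; linear_combination (PZ l) * hc⟩

lemma PhiZ_dvd_PhiHat {l j K : ℕ} (hlj : l ≠ j) (hl : l < K) : PhiZ l ∣ PhiHat j K := by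
  rcases lt_or_gt_of_ne hlj with hlt | hgt
  · -- l < j : PhiZ l divides PZ j
    rw [PhiHat]
    refine Dvd.dvd.mul_right ?_ _
    rw [PZ_prod]
    exact Finset.dvd_prod_of_mem _ (Finset.mem_range.mpr hlt)
  · -- l > j : l ∈ Ico (j+1) K
    rw [PhiHat]
    refine Dvd.dvd.mul_left ?_ _
    exact Finset.dvd_prod_of_mem _ (Finset.mem_Ico.mpr ⟨hgt, hl⟩)



lemma bound_cases (K l : ℕ) (hl : l < K) (a : ℤ) (b : ℕ) (hb : b < 2^l)
    (h : 2 + (K:ℚ) - (l:ℚ) - (2:ℚ)^(-(l:ℤ)) ≤ (a:ℚ) + (b:ℚ) / 2^l) :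
    ((K:ℤ) - l + 2 ≤ a) ∨ (a = (K:ℤ) - l + 1 ∧ b = 2^l - 1) := by
  have h2 : (0:ℚ) < 2^l := by positivity
  have hneg : (2:ℚ)^(-(l:ℤ)) = ((2:ℚ)^l)⁻¹ := by
    rw [zpow_neg, zpow_natCast]
  rw [hneg] at h
  have key : (2 + (K:ℚ) - l) * 2^l - 1 ≤ a * 2^l + b := by
    have h3 := mul_le_mul_of_nonneg_right h (le_of_lt h2)
    have e1 : (2 + (K:ℚ) - l - ((2:ℚ)^l)⁻¹) * 2^l = (2 + (K:ℚ) - l) * 2^l - 1 := by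
      field_simp
    have e2 : ((a:ℚ) + (b:ℚ)/2^l) * 2^l = a * 2^l + b := by
      field_simp
    rw [e1, e2] at h3
    exact h3
  have keyZ : (2 + (K:ℤ) - l) * 2^l - 1 ≤ a * 2^l + b := by
    have h4 : (((2 + (K:ℤ) - l) * 2^l - 1 : ℤ) : ℚ) ≤ ((a * 2^l + b : ℤ) : ℚ) := by
      push_cast
      convert key using 1 <;> ring
    exact_mod_cast h4
  have hmpos : (0:ℤ) < 2^l := by positivity
  have hbm : (b:ℤ) ≤ 2^l - 1 := by
    have : (b:ℤ) < 2^l := by exact_mod_cast hb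
    omega
  rcases le_or_gt ((K:ℤ) - l + 2) a with hA | hA
  · exact Or.inl hA
  · right
    have ha1 : a ≤ (K:ℤ) - l + 1 := by omega
    have h5 : a * 2^l ≤ ((K:ℤ) - l + 1) * 2^l :=
      mul_le_mul_of_nonneg_right ha1 (le_of_lt hmpos)
    have hbge : (2:ℤ)^l - 1 ≤ (b:ℤ) := by nlinarith [keyZ, h5]
    have hbeq : (b:ℤ) = 2^l - 1 := le_antisymm hbm hbge
    have h8 : ((K:ℤ) - l + 1) * 2^l ≤ a * 2^l := by nlinarith [keyZ, hbeq]
    have h9 : (K:ℤ) - l + 1 ≤ a := le_of_mul_le_mul_right h8 hmpos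
    refine ⟨by omega, ?_⟩
    have h10 : ((2^l - 1 : ℕ) : ℤ) = 2^l - 1 := by
      push_cast [Nat.one_le_two_pow]
      ring
    rw [← h10] at hbeq
    exact_mod_cast hbeq



lemma mq_C (m : ℤ) : mq (C m) = C (m:ℚ) := Polynomial.map_C _

lemma mq_expand (b : ℕ) (v₁ v₂ : Polynomial ℤ) :
    mq ((1-X)^b * v₁ + 2*v₂) = (1-X)^b * mq v₁ + 2 * mq v₂ := by
  rw [mq]
  push_cast [Polynomial.map_add, Polynomial.map_mul, Polynomial.map_pow,
    Polynomial.map_sub, Polynomial.map_one, Polynomial.map_X, Polynomial.map_ofNat]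
  ring

lemma step_T {K l : ℕ} (hl : l < K) (p : Polynomial ℚ) (z : Polynomial ℤ)
    (hz : mq (PhiZ l) ∣ p - 4 * mq z)
    (hNF : (mq (PhiZ l) ∣ p) ∨ ∃ (a u : ℤ) (b : ℕ) (v₁ v₂ : Polynomial ℤ),
      Odd u ∧ b < 2^l ∧ Odd (v₁.eval 1) ∧
      mq (PhiZ l) ∣ (p - C ((2:ℚ)^a / (u:ℚ)) * ((1-X)^b * mq v₁ + 2 * mq v₂)) ∧
      2 + (K:ℚ) - (l:ℚ) - (2:ℚ)^(-(l:ℤ)) ≤ (a:ℚ) + (b:ℚ)/2^l) :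
    ∃ (u : ℤ) (t : Polynomial ℤ), Odd u ∧ PhiZ l ∣ C u * z - PhiHat l K * t := by
  rcases hNF with hp | ⟨a, u, b, v₁, v₂, hu, hb, hv₁, hcong, hbound⟩
  · -- pr_l(p) = 0 : then PhiZ l ∣ z
    have h4 : mq (PhiZ l) ∣ 4 * mq z := by
      have := dvd_sub hp hz
      simpa using this
    have h4' : mq (PhiZ l) ∣ C (4:ℚ) * mq z := by
      rwa [map_ofNat]
    have hzdvd : PhiZ l ∣ z := (mq_dvd_iff (PhiZ_monic l)).mp (dvd_of_dvd_C_mul (by norm_num) h4')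
    exact ⟨1, 0, odd_one, by simpa using hzdvd⟩
  · have hu0 : (u:ℚ) ≠ 0 := by
      have : u ≠ 0 := by rcases hu with ⟨k, hk⟩; omega
      exact_mod_cast this
    set Y : Polynomial ℤ := (1-X)^b * v₁ + 2*v₂ with hY
    -- basic congruence : mq Φ ∣ C (2^a/u) * mq Y - 4 * mq z
    have h1 : mq (PhiZ l) ∣ C ((2:ℚ)^a / (u:ℚ)) * mq Y - 4 * mq z := by
      have hd := dvd_sub hz hcong
      have e : (p - 4 * mq z) - (p - C ((2:ℚ)^a / (u:ℚ)) * ((1-X)^b * mq v₁ + 2 * mq v₂))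
        = C ((2:ℚ)^a / (u:ℚ)) * ((1-X)^b * mq v₁ + 2 * mq v₂) - 4 * mq z := by ring
      rw [e] at hd
      rw [hY, mq_expand]
      exact hd
    -- bound case analysis
    have hcases := bound_cases K l hl a b hb hbound
    have ha2 : (2:ℤ) ≤ a := by
      have : (1:ℤ) ≤ (K:ℤ) - l := by
        have : (l:ℤ) < K := by exact_mod_cast hl
        omega
      rcases hcases with h | ⟨h, _⟩ <;> omega
    set A := a.toNat with hA
    have haA : (A:ℤ) = a := Int.toNat_of_nonneg (by omega)
    have hA2 : 2 ≤ A := by omega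
    -- convert to ℤ congruence and divide by 4 :
    have hcore : PhiZ l ∣ C u * z - C ((2:ℤ)^(A-2)) * Y := by
      have h2 : mq (PhiZ l) ∣ C (u:ℚ) * (C ((2:ℚ)^a / (u:ℚ)) * mq Y - 4 * mq z) := h1.mul_left _
      have e2 : C (u:ℚ) * (C ((2:ℚ)^a / (u:ℚ)) * mq Y - 4 * mq z)
          = C (4:ℚ) * (C ((2:ℚ)^(a-2)) * mq Y - C (u:ℚ) * mq z) := by
        have hcu : C (u:ℚ) * C ((2:ℚ)^a / (u:ℚ)) = C ((2:ℚ)^a) := by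
          rw [← C_mul, mul_comm (u:ℚ), div_mul_cancel₀ _ hu0]
        have e3 : (2:ℚ)^a = 4 * (2:ℚ)^(a-2) := by
          rw [show a = (a-2) + 2 by ring, zpow_add₀ (by norm_num : (2:ℚ) ≠ 0)]
          ring
        have hC4 : (C (4:ℚ)) = (4 : Polynomial ℚ) := map_ofNat _ _
        calc C (u:ℚ) * (C ((2:ℚ)^a / (u:ℚ)) * mq Y - 4 * mq z)
            = (C (u:ℚ) * C ((2:ℚ)^a / (u:ℚ))) * mq Y - 4 * (C (u:ℚ) * mq z) := by ring
          _ = C ((2:ℚ)^a) * mq Y - 4 * (C (u:ℚ) * mq z) := by rw [hcu]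
          _ = C (4:ℚ) * (C ((2:ℚ)^(a-2)) * mq Y - C (u:ℚ) * mq z) := by
              rw [e3, C_mul, hC4]; ring
      rw [e2] at h2
      have h3 : mq (PhiZ l) ∣ C ((2:ℚ)^(a-2)) * mq Y - C (u:ℚ) * mq z :=
        dvd_of_dvd_C_mul (by norm_num) h2
      have e4 : (2:ℚ)^(a-2) = (((2:ℤ)^(A-2) : ℤ) : ℚ) := by
        rw [show a - 2 = ((A - 2 : ℕ) : ℤ) by omega, zpow_natCast]
        push_cast
        ring
      rw [e4, ← mq_C, ← mq_C (u)] at h3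
      have h5 : mq (PhiZ l) ∣ mq (C ((2:ℤ)^(A-2)) * Y - C u * z) := by
        rw [mq, Polynomial.map_sub, Polynomial.map_mul, Polynomial.map_mul]
        exact h3
      have h6 := (mq_dvd_iff (PhiZ_monic l)).mp h5
      have : C u * z - C ((2:ℤ)^(A-2)) * Y = -(C ((2:ℤ)^(A-2)) * Y - C u * z) := by ring
      rw [this]
      exact h6.neg_right
    obtain ⟨c0, hc0⟩ := hcore
    rcases hcases with hcase1 | ⟨hcase2a, hcase2b⟩
    · -- a ≥ K - l + 2
      have hAe : K - l ≤ A - 2 := by omega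
      set e := A - 2 - (K - l) with he
      obtain ⟨c1, hc1⟩ := PhiHat_key1 (l := l) (K := K) hl
      refine ⟨u, C ((2:ℤ)^e) * ((1-X) * Y), hu, ⟨c0 - C ((2:ℤ)^e) * Y * c1, ?_⟩⟩
      have hpow : C ((2:ℤ)^(A-2)) = C ((2:ℤ)^e) * C ((2:ℤ)^(K-l)) := by
        rw [← C_mul, ← pow_add]
        congr 2
        omega
      rw [hpow] at hc0
      linear_combination hc0 - (C ((2:ℤ)^e) * Y) * hc1
    · -- a = K - l + 1, b = 2^l - 1
      have hAeq : A - 2 = K - 1 - l := by omega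
      obtain ⟨W0, hW0⟩ := exists_W0 l
      set t : Polynomial ℤ := W0 * v₁ + (1-X) * v₂ with ht
      -- exact identity : (1-X) * (PZ l * t - Y) = -(PhiZ l) * (t + v₁)
      have hb2 : (2:ℕ)^l = b + 1 := by
        have := Nat.one_le_two_pow (n := l)
        omega
      have hid : (1-X) * (PZ l * t - Y) = -(PhiZ l) * (t + v₁) := by
        have h1x : (1-X) * PZ l = 2 - PhiZ l := one_sub_X_mul_PZ l
        have hpow2 : (1-X:Polynomial ℤ)^(2^l) = (1-X)^b * (1-X) := by
          rw [hb2, pow_succ]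
        rw [hY, ht]
        calc (1-X) * (PZ l * (W0 * v₁ + (1-X) * v₂) - ((1-X)^b * v₁ + 2*v₂))
            = ((1-X) * PZ l) * (W0 * v₁ + (1-X) * v₂)
              - ((1-X)^b * (1-X)) * v₁ - 2 * (1-X) * v₂ := by ring
          _ = (2 - PhiZ l) * (W0 * v₁ + (1-X) * v₂)
              - (PhiZ l + 2 * W0) * v₁ - 2 * (1-X) * v₂ := by rw [h1x, ← hpow2, hW0]
          _ = -(PhiZ l) * ((W0 * v₁ + (1-X) * v₂) + v₁) := by ring
      have hD : PhiZ l ∣ PZ l * t - Y := by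
        have hq : mq (PhiZ l) ∣ (1 - X) * mq (PZ l * t - Y) := by
          have : (1 - X) * mq (PZ l * t - Y) = mq ((1-X) * (PZ l * t - Y)) := by
            simp only [mq, Polynomial.map_mul, Polynomial.map_sub, Polynomial.map_one,
              Polynomial.map_X]
          rw [this, hid]
          have : mq (-(PhiZ l) * (t + v₁)) = mq (PhiZ l) * mq (-(t + v₁)) := by
            rw [mq, ← Polynomial.map_mul]
            congr 1
            ring
          rw [this]
          exact Dvd.intro _ rfl
        exact (mq_dvd_iff (PhiZ_monic l)).mp (dvd_of_dvd_one_sub_X_mul hq)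
      obtain ⟨c2, hc2⟩ := hD
      obtain ⟨c3, hc3⟩ := PhiHat_key2 (l := l) (K := K) hl
      refine ⟨u, t, hu, ⟨c0 - C ((2:ℤ)^(K-1-l)) * c2 - c3 * t, ?_⟩⟩
      rw [hAeq] at hc0
      linear_combination hc0 - C ((2:ℤ)^(K-1-l)) * hc2 - t * hc3


lemma mq_def (f : Polynomial ℤ) : mq f = f.map (Int.castRingHom ℚ) := rfl

lemma mq_sum (s : Finset ℕ) (f : ℕ → Polynomial ℤ) : mq (∑ j ∈ s, f j) = ∑ j ∈ s, mq (f j) := by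
  simp [mq_def, Polynomial.map_sum]

lemma mq_one_sub_X : mq (1 - X) = 1 - X := by
  simp [mq_def]

lemma mq_prod (s : Finset ℕ) (f : ℕ → Polynomial ℤ) : mq (∏ j ∈ s, f j) = ∏ j ∈ s, mq (f j) := by
  simp [mq_def, Polynomial.map_prod]

lemma mq_PZ_eq (K : ℕ) : (∑ i ∈ Finset.range (2 ^ K), X ^ i : Polynomial ℚ) = mq (PZ K) := by
  rw [PZ, mq_def, Polynomial.map_sum]
  simp

lemma mkS_eq_iff (l : ℕ) (f g : Polynomial ℚ) :
    mkS l f = mkS l g ↔ mq (PhiZ l) ∣ f - g := by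
  rw [mkS, Ideal.Quotient.eq, Ideal.mem_span_singleton, mq_PhiZ]

lemma mkB_eq_iff (K : ℕ) (f g : Polynomial ℚ) :
    mkB K f = mkB K g ↔ mq (PZ K) ∣ f - g := by
  rw [mkB, Ideal.Quotient.eq, Ideal.mem_span_singleton, mq_PZ_eq]

lemma isnf_of_not_dvd (K l : ℕ) (p : Polynomial ℚ) (hnd : ¬ mq (PhiZ l) ∣ p) :
    ∃ w : ℚ, IsNF K l (mkB K p) w := by
  obtain ⟨d, hbd⟩ := IsLocalization.integerNormalization_map_to_map (nonZeroDivisors ℤ) p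
  set P : Polynomial ℤ := IsLocalization.integerNormalization (nonZeroDivisors ℤ) p with hP
  have hd0 : (d:ℤ) ≠ 0 := nonZeroDivisors.coe_ne_zero d
  have hmqP : mq P = C ((d:ℤ):ℚ) * p := by
    rw [mq_def, ← algebraMap_int_eq, hbd, zsmul_eq_mul]
    norm_cast
  have hdq0 : ((d:ℤ):ℚ) ≠ 0 := Int.cast_ne_zero.mpr hd0
  have hndP : ¬ PhiZ l ∣ P := by
    intro hdvd
    exact hnd (dvd_of_dvd_C_mul hdq0 (hmqP ▸ (mq_dvd_iff (PhiZ_monic l)).mpr hdvd))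
  obtain ⟨a₀, b, v₁, v₂, hb, hv₁, hdvd⟩ := nf_exists' l P hndP
  obtain ⟨n', u, hu, hdu⟩ := exists_two_pow_odd ((d:ℤ)).natAbs (d:ℤ) hd0 le_rfl
  have hu0 : (u:ℚ) ≠ 0 := by
    have : u ≠ 0 := by rcases hu with ⟨k, hk⟩; omega
    exact_mod_cast this
  set aZ : ℤ := (a₀ : ℤ) - n' with haZ
  refine ⟨aZ + (b:ℚ)/2^l, p, aZ, u, b, v₁, v₂, rfl, hu, hb, hv₁, ?_, rfl⟩
  rw [mkS_eq_iff]
  -- from hdvd over ℤ, map to ℚ and divide by d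
  have hq : mq (PhiZ l) ∣ mq (P - C ((2:ℤ)^a₀) * ((1-X)^b * v₁ + 2*v₂)) :=
    (mq_dvd_iff (PhiZ_monic l)).mpr hdvd
  have hexp : mq (P - C ((2:ℤ)^a₀) * ((1-X)^b * v₁ + 2*v₂)) =
      C ((d:ℤ):ℚ) * p - C (((2:ℤ)^a₀ : ℤ):ℚ) * ((1-X)^b * mq v₁ + 2 * mq v₂) := by
    rw [mq_def, Polynomial.map_sub, Polynomial.map_mul, Polynomial.map_C, ← mq_def, ← mq_def,
      mq_expand, hmqP]
    norm_num
  rw [hexp] at hq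
  have hkey : p - C ((2:ℚ)^aZ / (u:ℚ)) *
      ((1 - X)^b * v₁.map (Int.castRingHom ℚ) + 2 * v₂.map (Int.castRingHom ℚ)) =
      C (((d:ℤ):ℚ))⁻¹ * (C ((d:ℤ):ℚ) * p - C (((2:ℤ)^a₀ : ℤ):ℚ) *
        ((1-X)^b * mq v₁ + 2 * mq v₂)) := by
    have hfrac : (((2:ℤ)^a₀ : ℤ):ℚ) / ((d:ℤ):ℚ) = (2:ℚ)^aZ / (u:ℚ) := by
      rw [hdu, haZ]
      push_cast
      rw [zpow_sub₀ (by norm_num : (2:ℚ) ≠ 0)]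
      rw [zpow_natCast, zpow_natCast]
      have h2n : ((2:ℚ)^(n':ℕ)) ≠ 0 := by positivity
      field_simp
    have : C ((2:ℚ)^aZ / (u:ℚ)) = C (((d:ℤ):ℚ))⁻¹ * C (((2:ℤ)^a₀ : ℤ):ℚ) := by
      rw [← C_mul, ← hfrac]
      congr 1
      field_simp
    rw [this, ← mq_def, ← mq_def]
    have hdC : C (((d:ℤ):ℚ))⁻¹ * C (((d:ℤ):ℚ)) = 1 := by
      rw [← C_mul, inv_mul_cancel₀ hdq0, C_1]
    linear_combination (-p) * hdC
  rw [hkey]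
  exact hq.mul_left _

lemma odd_isCoprime_two_pow {U : ℤ} (hU : Odd U) (K : ℕ) : IsCoprime U ((2:ℤ)^K) := by
  obtain ⟨m, hm⟩ := hU
  have h2 : IsCoprime U (2:ℤ) := ⟨1, -m, by rw [hm]; ring⟩
  exact h2.pow_right

lemma coprime_mq_PhiZ {i j : ℕ} (hij : i ≠ j) : IsCoprime (mq (PhiZ i)) (mq (PhiZ j)) := by
  suffices h : ∀ i j : ℕ, i < j → IsCoprime (mq (PhiZ i)) (mq (PhiZ j)) by
    rcases lt_or_gt_of_ne hij with hlt | hgt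
    · exact h i j hlt
    · exact (h j i hgt).symm
  intro i j hlt
  obtain ⟨c, hc⟩ := PhiZ_dvd_PhiZ_sub_two hlt
  have hcq : mq (PhiZ j) - 2 = mq (PhiZ i) * mq c := by
    rw [← mq_mul, ← hc, mq_sub]
    norm_num [mq_def]
  refine ⟨-(C (2:ℚ)⁻¹) * mq c, C (2:ℚ)⁻¹, ?_⟩
  have h2 : (C (2:ℚ)⁻¹) * (2 : Polynomial ℚ) = 1 := by
    have h2' : (2 : Polynomial ℚ) = C (2:ℚ) := (map_ofNat C 2).symm
    rw [h2', ← C_mul, inv_mul_cancel₀ (by norm_num : (2:ℚ) ≠ 0), C_1]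
  linear_combination (C (2:ℚ)⁻¹) * hcq + h2

end Stmt13Aux
section
open Stmt13Aux

theorem stmt13 (K : ℕ) (hK : 1 ≤ K) (p : Polynomial ℚ)
    (h4 : ∀ l ≤ K - 1, ∃ z : Polynomial ℤ,
      mkS l p = mkS l (4 * z.map (Int.castRingHom ℚ)))
    (hw : ∀ l ≤ K - 1,
      ((2 + (K : ℚ) - (l : ℚ) - (2 : ℚ) ^ (-(l : ℤ)) : ℚ) : WithTop ℚ) ≤
        wl K l (mkB K p)) :
    ∃ z : Polynomial ℤ, mkB K p = mkB K (4 * z.map (Int.castRingHom ℚ)) := by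
  classical
  open Stmt13Aux in
  -- total choice of the z_l from h4
  choose zfun hzfun using h4
  set zf : ℕ → Polynomial ℤ := fun l => if h : l ≤ K - 1 then zfun l h else 0 with hzf
  have hz : ∀ l < K, mq (PhiZ l) ∣ p - 4 * mq (zf l) := by
    intro l hl
    have hl' : l ≤ K - 1 := by omega
    have := hzfun l hl'
    rw [mkS_eq_iff] at this
    simpa [hzf, dif_pos hl', mq_def] using this
  -- the disjunction hypothesis of step_T
  have hNF : ∀ l, l < K → (mq (PhiZ l) ∣ p) ∨ ∃ (a u : ℤ) (b : ℕ) (v₁ v₂ : Polynomial ℤ),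
      Odd u ∧ b < 2^l ∧ Odd (v₁.eval 1) ∧
      mq (PhiZ l) ∣ (p - C ((2:ℚ)^a / (u:ℚ)) * ((1-X)^b * mq v₁ + 2 * mq v₂)) ∧
      2 + (K:ℚ) - (l:ℚ) - (2:ℚ)^(-(l:ℤ)) ≤ (a:ℚ) + (b:ℚ)/2^l := by
    intro l hl
    by_cases hex : ∃ w, IsNF K l (mkB K p) w
    · right
      have hwl := hw l (by omega)
      rw [wl, dif_pos hex] at hwl
      have hble : 2 + (K:ℚ) - (l:ℚ) - (2:ℚ)^(-(l:ℤ)) ≤ hex.choose := by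
        exact_mod_cast hwl
      obtain ⟨p', aa, uu, bb, w₁, w₂, hmkB, huu, hbb, hw₁, hmkS, hwval⟩ := hex.choose_spec
      refine ⟨aa, uu, bb, w₁, w₂, huu, hbb, hw₁, ?_, ?_⟩
      · -- congruence transported from p'
        rw [mkS_eq_iff] at hmkS
        rw [mkB_eq_iff] at hmkB
        have hfac : mq (PhiZ l) ∣ mq (PZ K) := by
          rw [(mq_dvd_iff (PhiZ_monic l))]
          exact ⟨PhiHat l K, PZ_eq_PhiZ_mul_PhiHat hl⟩
        have h1 : mq (PhiZ l) ∣ p' - p := hfac.trans hmkB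
        have h2 := dvd_sub hmkS h1
        have e : (p' - C ((2:ℚ)^aa / (uu:ℚ)) * ((1 - X)^bb * w₁.map (Int.castRingHom ℚ)
            + 2 * w₂.map (Int.castRingHom ℚ))) - (p' - p)
            = p - C ((2:ℚ)^aa / (uu:ℚ)) * ((1-X)^bb * mq w₁ + 2 * mq w₂) := by
          rw [mq_def, mq_def]
          ring
        rw [e] at h2
        exact h2
      · rw [hwval] at hble
        exact hble
    · left
      by_contra hnd
      exact hex (isnf_of_not_dvd K l p hnd)
  -- apply step_T at every level
  have hstep : ∀ l, ∃ (u : ℤ) (t : Polynomial ℤ), Odd u ∧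
      (l < K → PhiZ l ∣ C u * (zf l) - PhiHat l K * t) := by
    intro l
    by_cases hl : l < K
    · obtain ⟨u, t, hu, hdvd⟩ := step_T hl p (zf l) (hz l hl) (hNF l hl)
      exact ⟨u, t, hu, fun _ => hdvd⟩
    · exact ⟨1, 0, odd_one, fun h => absurd h hl⟩
  choose uf tf huf hdvdf using hstep
  set U : ℤ := ∏ l ∈ Finset.range K, uf l with hU
  have hUodd : Odd U :=
    Finset.prod_induction uf Odd (fun _ _ => Odd.mul) odd_one (fun l _ => huf l)
  -- route 1 : U·p ≡ 4·zstar
  set zstar : Polynomial ℤ :=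
    ∑ l ∈ Finset.range K, C (∏ j ∈ (Finset.range K).erase l, uf j) * (PhiHat l K * tf l)
    with hzstar
  have hroute1 : ∀ l ∈ Finset.range K, mq (PhiZ l) ∣ C ((U:ℤ):ℚ) * p - 4 * mq zstar := by
    intro l hlmem
    have hl : l < K := Finset.mem_range.mp hlmem
    obtain ⟨w1, hw1⟩ := hz l hl
    obtain ⟨w2, hw2⟩ := hdvdf l hl
    have hw2q : C ((uf l : ℤ):ℚ) * mq (zf l) - mq (PhiHat l K) * mq (tf l)
        = mq (PhiZ l) * mq w2 := by
      have h := congrArg mq hw2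
      simp only [mq_sub, mq_mul, mq_C] at h
      exact h
    set S : Polynomial ℤ := ∑ j ∈ (Finset.range K).erase l,
      C (∏ i ∈ (Finset.range K).erase j, uf i) * (PhiHat j K * tf j) with hS
    have hzsplit : zstar = C (∏ j ∈ (Finset.range K).erase l, uf j) * (PhiHat l K * tf l) + S := by
      rw [hzstar, hS]
      exact (Finset.add_sum_erase _ (fun j => C (∏ i ∈ (Finset.range K).erase j, uf i) *
        (PhiHat j K * tf j)) hlmem).symm
    have hSdvd : mq (PhiZ l) ∣ mq S := by
      rw [hS, mq_sum]
      refine Finset.dvd_sum ?_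
      intro j hj
      have hjK : j < K := Finset.mem_range.mp (Finset.mem_of_mem_erase hj)
      have hne : l ≠ j := (Finset.ne_of_mem_erase hj).symm
      have hd : PhiZ l ∣ C (∏ i ∈ (Finset.range K).erase j, uf i) * (PhiHat j K * tf j) :=
        Dvd.dvd.mul_left ((PhiZ_dvd_PhiHat hne hl).mul_right _) _
      exact (mq_dvd_iff (PhiZ_monic l)).mpr hd
    obtain ⟨w3, hw3⟩ := hSdvd
    have hmqzstar : mq zstar = C ((∏ j ∈ (Finset.range K).erase l, uf j : ℤ):ℚ) *
        (mq (PhiHat l K) * mq (tf l)) + mq S := by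
      rw [hzsplit, mq_add, mq_mul, mq_C, mq_mul]
    have hcastU : C ((U:ℤ):ℚ) =
        C ((uf l : ℤ):ℚ) * C ((∏ j ∈ (Finset.range K).erase l, uf j : ℤ):ℚ) := by
      rw [← C_mul]
      congr 1
      rw [hU, ← Finset.mul_prod_erase _ _ hlmem]
      push_cast
      ring
    refine ⟨C ((∏ j ∈ (Finset.range K).erase l, uf j : ℤ):ℚ) * (C ((uf l : ℤ):ℚ) * w1 + 4 * mq w2)
      - 4 * w3, ?_⟩
    rw [hcastU, hmqzstar]
    linear_combination C ((∏ j ∈ (Finset.range K).erase l, uf j : ℤ):ℚ) *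
        (C ((uf l : ℤ):ℚ) * hw1 + 4 * hw2q) - 4 * hw3
  -- route 2 : 2^K·p ≡ 4·zB
  set zB : Polynomial ℤ :=
    ∑ l ∈ Finset.range K, C ((2:ℤ)^l) * ((1-X) * (PhiHat l K * zf l)) with hzB
  have hroute2 : ∀ l ∈ Finset.range K, mq (PhiZ l) ∣ C (((2:ℤ)^K : ℤ):ℚ) * p - 4 * mq zB := by
    intro l hlmem
    have hl : l < K := Finset.mem_range.mp hlmem
    obtain ⟨w1, hw1⟩ := hz l hl
    obtain ⟨w2, hw2⟩ := PhiHat_key1 (l := l) (K := K) hl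
    have hw2q : (1 - X) * mq (PhiHat l K) - C (((2:ℤ)^(K-l) : ℤ):ℚ) = mq (PhiZ l) * mq w2 := by
      have h := congrArg mq hw2
      rw [mq_sub, mq_mul, mq_mul, mq_C, mq_one_sub_X] at h
      exact h
    set S : Polynomial ℤ := ∑ j ∈ (Finset.range K).erase l,
      C ((2:ℤ)^j) * ((1-X) * (PhiHat j K * zf j)) with hS
    have hzsplit : zB = C ((2:ℤ)^l) * ((1-X) * (PhiHat l K * zf l)) + S := by
      rw [hzB, hS]
      exact (Finset.add_sum_erase _ (fun j => C ((2:ℤ)^j) *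
        ((1-X) * (PhiHat j K * zf j))) hlmem).symm
    have hSdvd : mq (PhiZ l) ∣ mq S := by
      rw [hS, mq_sum]
      refine Finset.dvd_sum ?_
      intro j hj
      have hne : l ≠ j := (Finset.ne_of_mem_erase hj).symm
      have hd : PhiZ l ∣ C ((2:ℤ)^j) * ((1-X) * (PhiHat j K * zf j)) :=
        Dvd.dvd.mul_left (Dvd.dvd.mul_left ((PhiZ_dvd_PhiHat hne hl).mul_right _) _) _
      exact (mq_dvd_iff (PhiZ_monic l)).mpr hd
    obtain ⟨w3, hw3⟩ := hSdvd
    have hmqzB : mq zB = C (((2:ℤ)^l : ℤ):ℚ) * ((1-X) * (mq (PhiHat l K) * mq (zf l))) + mq S := by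
      rw [hzsplit, mq_add, mq_mul, mq_C, mq_mul, mq_one_sub_X, mq_mul]
    have hcast2 : C (((2:ℤ)^K : ℤ):ℚ) = C (((2:ℤ)^l : ℤ):ℚ) * C (((2:ℤ)^(K-l) : ℤ):ℚ) := by
      rw [← C_mul]
      congr 1
      push_cast [← pow_add]
      congr 1
      omega
    refine ⟨C (((2:ℤ)^l : ℤ):ℚ) * (C (((2:ℤ)^(K-l) : ℤ):ℚ) * w1 - 4 * (mq w2 * mq (zf l)))
      - 4 * w3, ?_⟩
    rw [hcast2, hmqzB]
    linear_combination C (((2:ℤ)^l : ℤ):ℚ) * (C (((2:ℤ)^(K-l) : ℤ):ℚ) * hw1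
      - 4 * (mq (zf l)) * hw2q) - 4 * hw3
  -- assemble with coprimality
  have hpair : (↑(Finset.range K) : Set ℕ).Pairwise (Function.onFun IsCoprime fun l => mq (PhiZ l)) :=
    fun i _ j _ hij => coprime_mq_PhiZ hij
  have hP1 : mq (PZ K) ∣ C ((U:ℤ):ℚ) * p - 4 * mq zstar := by
    rw [PZ_prod, mq_prod]
    exact Finset.prod_dvd_of_coprime hpair hroute1
  have hP2 : mq (PZ K) ∣ C (((2:ℤ)^K : ℤ):ℚ) * p - 4 * mq zB := by
    rw [PZ_prod, mq_prod]
    exact Finset.prod_dvd_of_coprime hpair hroute2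
  -- Bezout
  obtain ⟨α, β, hab⟩ := odd_isCoprime_two_pow hUodd K
  refine ⟨C α * zstar + C β * zB, ?_⟩
  rw [mkB_eq_iff]
  have hmqz : mq (C α * zstar + C β * zB) = C (α:ℚ) * mq zstar + C (β:ℚ) * mq zB := by
    rw [mq_add, mq_mul, mq_mul, mq_C, mq_C]
  have hab' : (α:ℚ) * ((U:ℤ):ℚ) + (β:ℚ) * (((2:ℤ)^K : ℤ):ℚ) = 1 := by
    exact_mod_cast congrArg (fun x : ℤ => (x:ℚ)) hab
  have hCab : C (α:ℚ) * C ((U:ℤ):ℚ) + C (β:ℚ) * C (((2:ℤ)^K : ℤ):ℚ) = 1 := by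
    rw [← C_mul, ← C_mul, ← C_add, hab', C_1]
  obtain ⟨c1, hc1⟩ := hP1
  obtain ⟨c2, hc2⟩ := hP2
  refine ⟨C (α:ℚ) * c1 + C (β:ℚ) * c2, ?_⟩
  have hmap4 : mq (4 : Polynomial ℤ) = 4 := by norm_num [mq_def]
  rw [← mq_def (C α * zstar + C β * zB), hmqz]
  linear_combination C (α:ℚ) * hc1 + C (β:ℚ) * hc2 - p * hCab

end
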